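/- arXiv:1301.1776 — 2 statements merged into one kernel-verified Lean document; each statement's English description precedes it below -/
import Mathlib

section
/- Let ν = (ν₁,…,νₙ) be a vector of nonzero integers. The Laurent polynomial x^ν - 1 = x₁^{ν₁}⋯xₙ^{νₙ} - 1 is irreducible in ℤ[x₁,x₁⁻¹,…,xₙ,xₙ⁻¹] if and only if gcd(ν₁,…,νₙ) = 1. -/
/-- The Laurent polynomial ring in `n` variables over `ℤ`. -/
abbrev LaurentMv (n : ℕ) : Type := AddMonoidAlgebra ℤ (Fin n → ℤ)

/-- The monomial `x^ν` in the Laurent polynomial ring. -/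
noncomputable def laurentMonomial {n : ℕ} (ν : Fin n → ℤ) : LaurentMv n :=
  AddMonoidAlgebra.single ν (1 : ℤ)

namespace LaurentAux

variable {n : ℕ}

instance (n : ℕ) : IsDomain (LaurentMv n) := NoZeroDivisors.to_isDomain _

lemma mono_mul (a b : Fin n → ℤ) :
    laurentMonomial a * laurentMonomial b = laurentMonomial (a + b) := by
  simp [laurentMonomial, AddMonoidAlgebra.single_mul_single]

lemma mono_zero : laurentMonomial (0 : Fin n → ℤ) = 1 := by
  simp [laurentMonomial, AddMonoidAlgebra.one_def]

lemma mono_pow (g : Fin n → ℤ) (m : ℕ) :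
    laurentMonomial g ^ m = laurentMonomial (m • g) := by
  simp [laurentMonomial, AddMonoidAlgebra.single_pow]

/-- The augmentation map (evaluation at all `xᵢ = 1`). -/
noncomputable def aug (n : ℕ) : LaurentMv n →ₐ[ℤ] ℤ :=
  (AddMonoidAlgebra.lift ℤ ℤ (Fin n → ℤ)) 1

@[simp] lemma aug_single (w : Fin n → ℤ) (c : ℤ) :
    aug n (AddMonoidAlgebra.single w c) = c := by
  simp [aug, AddMonoidAlgebra.lift_single]

@[simp] lemma aug_mono (w : Fin n → ℤ) : aug n (laurentMonomial w) = 1 :=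
  aug_single w 1

lemma dvd_sub_one (g : Fin n → ℤ) (k : ℤ) :
    (laurentMonomial g - 1) ∣ (laurentMonomial (k • g) - 1) := by
  have hnat : ∀ m : ℕ, (laurentMonomial g - 1) ∣ (laurentMonomial ((m : ℤ) • g) - 1) := by
    intro m
    have : ((m : ℤ) • g) = m • g := by simp
    rw [this, ← mono_pow]
    simpa using sub_dvd_pow_sub_pow (laurentMonomial g) 1 m
  obtain ⟨m, rfl | rfl⟩ := k.eq_nat_or_neg
  · exact hnat m
  · have hmul : laurentMonomial ((-(m : ℤ)) • g) * (laurentMonomial ((m : ℤ) • g) - 1)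
        = -(laurentMonomial ((-(m : ℤ)) • g) - 1) := by
      rw [mul_sub, mul_one, mono_mul]
      have : (-(m : ℤ)) • g + (m : ℤ) • g = 0 := by rw [← add_smul]; simp
      rw [this, mono_zero]; ring
    have h := (hnat m).mul_left (laurentMonomial ((-(m : ℤ)) • g))
    rw [hmul, dvd_neg] at h
    exact h

lemma map_single (π : (Fin n → ℤ) →+ (Fin n → ℤ)) (w : Fin n → ℤ) (c : ℤ) :
    AddMonoidAlgebra.mapDomainRingHom ℤ π (AddMonoidAlgebra.single w c)
      = AddMonoidAlgebra.single (π w) c :=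
  AddMonoidAlgebra.mapDomain_single

lemma map_mono (π : (Fin n → ℤ) →+ (Fin n → ℤ)) (w : Fin n → ℤ) :
    AddMonoidAlgebra.mapDomainRingHom ℤ π (laurentMonomial w) = laurentMonomial (π w) :=
  AddMonoidAlgebra.mapDomain_single

lemma dvd_sub_map (ν : Fin n → ℤ) (π : (Fin n → ℤ) →+ (Fin n → ℤ))
    (hπ : ∀ w, ∃ k : ℤ, w = π w + k • ν) (a : LaurentMv n) :
    (laurentMonomial ν - 1) ∣ (a - AddMonoidAlgebra.mapDomainRingHom ℤ π a) := by
  induction a using AddMonoidAlgebra.induction with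
  | zero => simp
  | single_add w c a _ _ ih =>
    rw [map_add, map_single, add_sub_add_comm]
    refine dvd_add ?_ ih
    obtain ⟨k, hk⟩ := hπ w
    have key : (AddMonoidAlgebra.single w c : LaurentMv n) - AddMonoidAlgebra.single (π w) c
        = AddMonoidAlgebra.single (π w) c * (laurentMonomial (k • ν) - 1) := by
      rw [mul_sub, mul_one, laurentMonomial, AddMonoidAlgebra.single_mul_single, mul_one, ← hk]
    rw [key]
    exact (dvd_sub_one ν k).mul_left _

lemma exists_sum_eq_gcd (ν : Fin n → ℤ) (s : Finset (Fin n)) :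
    ∃ c : Fin n → ℤ, ∑ i ∈ s, c i * ν i = s.gcd ν := by
  classical
  induction s using Finset.induction_on with
  | empty => exact ⟨0, by simp⟩
  | @insert a s ha ih =>
    obtain ⟨c, hc⟩ := ih
    set A := Int.gcdA (ν a) (s.gcd ν)
    set B := Int.gcdB (ν a) (s.gcd ν)
    refine ⟨Function.update (fun i => B * c i) a A, ?_⟩
    rw [Finset.sum_insert ha, Finset.gcd_insert, Function.update_self]
    have hcongr : ∑ i ∈ s, Function.update (fun i => B * c i) a A i * ν i
        = ∑ i ∈ s, B * (c i * ν i) := by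
      refine Finset.sum_congr rfl fun i hi => ?_
      rw [Function.update_of_ne (ne_of_mem_of_not_mem hi ha)]
      ring
    rw [hcongr, ← Finset.mul_sum, hc, ← Int.coe_gcd, Int.gcd_eq_gcd_ab (ν a) (s.gcd ν)]
    ring

theorem main (n : ℕ) (ν : Fin n → ℤ) (hν : ∀ i, ν i ≠ 0) :
    Irreducible (laurentMonomial ν - 1) ↔ Finset.univ.gcd ν = 1 := by
  constructor
  · intro hirr
    by_contra hd
    set d : ℤ := Finset.univ.gcd ν with hdef
    by_cases h0 : d = 0
    · -- then ν = 0, so the element is 0, not irreducible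
      have hz : ∀ i ∈ Finset.univ, ν i = 0 := Finset.gcd_eq_zero_iff.mp h0
      have hν0 : ν = 0 := funext fun i => hz i (Finset.mem_univ i)
      rw [hν0] at hirr
      rw [show laurentMonomial (0 : Fin n → ℤ) = 1 from mono_zero] at hirr
      simp at hirr
    · have hnonneg : 0 ≤ d := by
        exact Int.nonneg_of_normalize_eq_self Finset.normalize_gcd
      set μ : Fin n → ℤ := fun i => ν i / d with hμ
      have hdvd : ∀ i, d ∣ ν i := fun i => Finset.gcd_dvd (Finset.mem_univ i)
      have hνμ : ν = d.toNat • μ := by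
        funext i
        have : (d.toNat : ℤ) = d := Int.toNat_of_nonneg hnonneg
        simp only [Pi.smul_apply, natCast_zsmul, hμ]
        rw [show (d.toNat • (ν i / d)) = (d.toNat : ℤ) * (ν i / d) by simp [smul_eq_mul], this,
          Int.mul_ediv_cancel' (hdvd i)]
      have hfac : laurentMonomial ν - 1
          = (∑ i ∈ Finset.range d.toNat, laurentMonomial μ ^ i) * (laurentMonomial μ - 1) := by
        rw [geom_sum_mul, mono_pow, ← hνμ]
      rcases hirr.isUnit_or_isUnit hfac with hu | hu
      · have := hu.map (aug n)
        have haug : aug n (∑ i ∈ Finset.range d.toNat, laurentMonomial μ ^ i) = d := by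
          rw [map_sum]
          have : ∀ i ∈ Finset.range d.toNat, aug n (laurentMonomial μ ^ i) = 1 := by
            intro i _; rw [map_pow, aug_mono, one_pow]
          rw [Finset.sum_congr rfl this]
          simp [Int.toNat_of_nonneg hnonneg]
        rw [haug] at this
        rcases Int.isUnit_iff.mp this with h | h <;> omega
      · have := hu.map (aug n)
        rw [map_sub, aug_mono, map_one, sub_self] at this
        exact not_isUnit_zero this
  · intro hgcd
    -- Bezout coefficients
    obtain ⟨c, hc⟩ := exists_sum_eq_gcd ν Finset.univ
    rw [hgcd] at hc
    -- the additive functional f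
    set f : (Fin n → ℤ) →+ ℤ := AddMonoidHom.mk' (fun w => ∑ i, c i * w i)
      (fun x y => by simp [Pi.add_apply, mul_add, Finset.sum_add_distrib]) with hf
    have hfν : f ν = 1 := hc
    set π : (Fin n → ℤ) →+ (Fin n → ℤ) := AddMonoidHom.mk' (fun w => w - f w • ν)
      (fun x y => by rw [map_add, add_smul]; abel) with hπdef
    have hπ : ∀ w, ∃ k : ℤ, w = π w + k • ν := fun w =>
      ⟨f w, by show w = (w - f w • ν) + f w • ν; abel⟩
    set φ := AddMonoidAlgebra.mapDomainRingHom ℤ π with hφ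
    have hφν : φ (laurentMonomial ν - 1) = 0 := by
      have h1 : π ν = 0 := by show ν - f ν • ν = 0; rw [hfν, one_smul, sub_self]
      rw [map_sub, map_one, map_mono, h1, mono_zero, sub_self]
    have hν0 : ν ≠ 0 := by
      intro h
      rw [h] at hgcd
      rcases n.eq_zero_or_pos with hn | hn
      · have : (Finset.univ : Finset (Fin n)) = ∅ := by
          rw [Finset.univ_eq_empty_iff]; rw [hn]; infer_instance
        rw [this] at hgcd; simp at hgcd
      · exact hν ⟨0, hn⟩ (congrFun h ⟨0, hn⟩)
    have hprime : Prime (laurentMonomial ν - 1) := by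
      refine ⟨?_, ?_, ?_⟩
      · intro h
        rw [sub_eq_zero] at h
        rw [show (1 : LaurentMv n) = AddMonoidAlgebra.single (0 : Fin n → ℤ) (1 : ℤ) from AddMonoidAlgebra.one_def] at h
        rcases AddMonoidAlgebra.single_inj.mp h with ⟨h1, _⟩ | ⟨h1, _⟩
        · exact hν0 h1
        · exact one_ne_zero h1
      · intro hu
        have := hu.map (aug n)
        rw [map_sub, aug_mono, map_one, sub_self] at this
        exact not_isUnit_zero this
      · intro a b hab
        obtain ⟨t, ht⟩ := hab
        have hφab : φ a * φ b = 0 := by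
          rw [← map_mul, ht, map_mul, hφν, zero_mul]
        rcases mul_eq_zero.mp hφab with h | h
        · left
          have := dvd_sub_map ν π hπ a
          rw [← hφ, h, sub_zero] at this
          exact this
        · right
          have := dvd_sub_map ν π hπ b
          rw [← hφ, h, sub_zero] at this
          exact this
    exact hprime.irreducible

end LaurentAux

theorem laurent_sub_one_irreducible_iff_gcd_eq_one (n : ℕ) (ν : Fin n → ℤ)
    (hν : ∀ i, ν i ≠ 0) :
    Irreducible (laurentMonomial ν - 1) ↔ Finset.univ.gcd ν = 1 :=
  LaurentAux.main n ν hν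
end

section
/- Let a₁,…,aₙ ∈ ℤ^d generate ℤ^d with associated matrix A of rank d, and let w₁,…,w_{n-d} be a ℤ-basis of ker(Aᵀ) ⊆ ℤⁿ. Then a point x ∈ (ℂ*)ⁿ satisfies x^{wᵢ} = 1 for all i = 1,…,n-d if and only if there exists t ∈ (ℂ*)^d with x = (t^{a₁},…,t^{aₙ}). -/
private lemma prod_zpow_eq_zpow_sum {G : Type*} [CommGroup G] {ι : Type*} (g : G) (e : ι → ℤ)
    (s : Finset ι) : ∏ j ∈ s, g ^ e j = g ^ ∑ j ∈ s, e j := by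
  classical
  induction s using Finset.induction_on with
  | empty => simp
  | @insert _ _ h ih => rw [Finset.prod_insert h, Finset.sum_insert h, ih, zpow_add]

theorem torus_orbit_eq_binomial_zero_locus
    (n d : ℕ) (a : Fin n → Fin d → ℤ)
    (hgen : Submodule.span ℤ (Set.range a) = (⊤ : Submodule ℤ (Fin d → ℤ)))
    (w : Fin (n - d) → (Fin n → ℤ))
    (hw : LinearIndependent ℤ w)
    (hker : Submodule.span ℤ (Set.range w) =
      LinearMap.ker (Matrix.toLin' (Matrix.of fun (k : Fin d) (i : Fin n) => a i k)))
    (x : Fin n → ℂ) (hx : ∀ i, x i ≠ 0) :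
    (∀ i : Fin (n - d), ∏ j, x j ^ (w i j) = 1) ↔
      ∃ t : Fin d → ℂ, (∀ k, t k ≠ 0) ∧ ∀ i, x i = ∏ k, t k ^ (a i k) := by
  classical
  set A : Matrix (Fin d) (Fin n) ℤ := Matrix.of fun (k : Fin d) (i : Fin n) => a i k with hA
  set φ : (Fin n → ℤ) →ₗ[ℤ] (Fin d → ℤ) := Matrix.toLin' A with hφ
  set u : Fin n → ℂˣ := fun j => Units.mk0 (x j) (hx j) with hu
  set m : Fin n → Additive ℂˣ := fun j => Additive.ofMul (u j) with hm
  set χ : (Fin n → ℤ) →ₗ[ℤ] Additive ℂˣ := Fintype.linearCombination ℤ m with hχ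
  have hχ_apply : ∀ v : Fin n → ℤ, Additive.toMul (χ v) = ∏ j, u j ^ v j := by
    intro v
    rw [hχ, Fintype.linearCombination_apply, toMul_sum]
    simp [hm, toMul_zsmul]
  have hval : ∀ v : Fin n → ℤ, ((Additive.toMul (χ v) : ℂˣ) : ℂ) = ∏ j, x j ^ v j := by
    intro v
    rw [hχ_apply, Units.coe_prod]
    simp [Units.val_zpow_eq_zpow_val, hu]
  have hφ_single : ∀ j, φ (Pi.single j 1) = a j := by
    intro j
    rw [hφ]
    simp only [Matrix.toLin'_apply]
    ext k
    rw [Matrix.mulVec_single]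
    simp [hA]
  constructor
  · intro H
    have hle : LinearMap.ker φ ≤ LinearMap.ker χ := by
      rw [← hker, Submodule.span_le]
      rintro _ ⟨i, rfl⟩
      have h1 : Additive.toMul (χ (w i)) = 1 := by
        have h2 := hval (w i)
        rw [H i] at h2
        exact Units.ext h2
      simpa using h1
    have hsurj : LinearMap.range φ = ⊤ := by
      rw [← top_le_iff, ← hgen, Submodule.span_le]
      rintro _ ⟨j, rfl⟩
      exact ⟨Pi.single j 1, hφ_single j⟩
    obtain ⟨σ, hσ⟩ := LinearMap.exists_rightInverse_of_surjective φ hsurj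
    set ψ : (Fin d → ℤ) →ₗ[ℤ] Additive ℂˣ := χ ∘ₗ σ with hψ
    have hfac : ∀ v, ψ (φ v) = χ v := by
      intro v
      have hmem : σ (φ v) - v ∈ LinearMap.ker φ := by
        rw [LinearMap.mem_ker, map_sub]
        have h3 : φ (σ (φ v)) = φ v := by
          have := congrArg (fun f => f (φ v)) hσ
          simpa using this
        simp [h3]
      have h4 := hle hmem
      rw [LinearMap.mem_ker, map_sub, sub_eq_zero] at h4
      simpa [hψ] using h4
    refine ⟨fun k => ((Additive.toMul (ψ (Pi.single k 1)) : ℂˣ) : ℂ), fun k => Units.ne_zero _, ?_⟩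
    intro j
    have h1 : ψ (a j) = χ (Pi.single j 1) := by rw [← hφ_single j, hfac]
    have h2 : ψ (a j) = ∑ k, a j k • ψ (Pi.single k 1) := by
      have hdec : (a j : Fin d → ℤ) = ∑ k, (a j k) • Pi.single k (1 : ℤ) := by
        ext k'
        simp [Finset.sum_apply, Pi.single_apply]
      conv_lhs => rw [hdec]
      rw [map_sum]
      exact Finset.sum_congr rfl fun k _ => map_smul ψ _ _
    have h3 : ((Additive.toMul (χ (Pi.single j 1)) : ℂˣ) : ℂ) = x j := by
      rw [hval]
      simp [Pi.single_apply]
    rw [← h3, ← h1, h2, toMul_sum, Units.coe_prod]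
    exact Finset.prod_congr rfl fun k _ => by
      rw [toMul_zsmul, Units.val_zpow_eq_zpow_val]
  · rintro ⟨t, ht, hxt⟩ i
    set s : Fin d → ℂˣ := fun k => Units.mk0 (t k) (ht k) with hs
    have hwker : φ (w i) = 0 := by
      have hmem : w i ∈ LinearMap.ker φ := by
        rw [← hker]; exact Submodule.subset_span ⟨i, rfl⟩
      simpa using hmem
    have hexp : ∀ k, ∑ j, a j k * w i j = 0 := by
      intro k
      have h5 := congrFun hwker k
      rw [hφ] at h5
      simpa [Matrix.toLin'_apply, Matrix.mulVec, dotProduct, hA, mul_comm] using h5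
    have hux : ∀ j, u j = ∏ k, s k ^ a j k := by
      intro j
      apply Units.ext
      rw [Units.coe_prod]
      simpa [hu, hs, Units.val_zpow_eq_zpow_val] using hxt j
    have hone : (∏ j, (u j) ^ (w i j) : ℂˣ) = 1 := by
      calc (∏ j, (u j) ^ (w i j) : ℂˣ)
          = ∏ j, ∏ k, (s k ^ a j k) ^ w i j := by
            simp_rw [hux, ← Finset.prod_zpow]
        _ = ∏ j, ∏ k, s k ^ (a j k * w i j) := by simp_rw [← zpow_mul]
        _ = ∏ k, ∏ j, s k ^ (a j k * w i j) := Finset.prod_comm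
        _ = ∏ k, s k ^ (∑ j, a j k * w i j) := by
            exact Finset.prod_congr rfl fun k _ => prod_zpow_eq_zpow_sum _ _ _
        _ = 1 := by simp [hexp]
    have h6 := hval (w i)
    rw [hχ_apply (w i), hone] at h6
    rw [← h6]
    simp
end
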